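/- For every n ≥ 1, the sum of the von Mangoldt function Λ(f) over all monic polynomials f of degree n in 𝔽_q[x] equals q^n. -/

import Mathlib

open Polynomial
open scoped Classical

/-- The von Mangoldt function on `𝔽_q[x]`: `Λ(f) = deg P` if `f = c·P^j` with
`c ∈ 𝔽_q^×`, `P` monic irreducible and `j ≥ 1`, and `Λ(f) = 0` otherwise. -/
noncomputable def polyVonMangoldt (F : Type) [Field F] [Fintype F] (f : F[X]) : ℕ :=
  if h : ∃ P : F[X], P.Monic ∧ Irreducible P ∧
      ∃ j : ℕ, 1 ≤ j ∧ ∃ c : F, c ≠ 0 ∧ f = C c * P ^ j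
  then h.choose.natDegree else 0

section Aux
variable (F : Type) [Field F] [Fintype F]

lemma monicSet_finite (n : ℕ) : {f : F[X] | f.Monic ∧ f.natDegree = n}.Finite := by
  rw [Set.finite_coe_iff.symm]
  exact Finite.of_equiv _ ((monicEquivDegreeLT n).trans (degreeLTEquiv F n).toEquiv).symm

noncomputable def Mset (n : ℕ) : Finset F[X] := (monicSet_finite F n).toFinset

lemma mem_Mset {n : ℕ} {g : F[X]} : g ∈ Mset F n ↔ g.Monic ∧ g.natDegree = n := by
  simp [Mset, Set.Finite.mem_toFinset]

lemma card_Mset (n : ℕ) : (Mset F n).card = Fintype.card F ^ n := by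
  have h1 : Nat.card {f : F[X] // f.Monic ∧ f.natDegree = n} = Fintype.card F ^ n := by
    rw [Nat.card_congr ((monicEquivDegreeLT n).trans (degreeLTEquiv F n).toEquiv)]
    simp [Nat.card_eq_fintype_card]
  haveI := (monicSet_finite F n).fintype
  rw [Mset, ← h1, Set.Finite.card_toFinset, ← Nat.card_eq_fintype_card]
  rfl


variable {F}

lemma vM_eq_zero {f : F[X]}
    (h : ¬ ∃ P : F[X], P.Monic ∧ Irreducible P ∧
      ∃ j : ℕ, 1 ≤ j ∧ ∃ c : F, c ≠ 0 ∧ f = C c * P ^ j) :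
    polyVonMangoldt F f = 0 := dif_neg h

lemma vM_prime_pow {P : F[X]} (hm : P.Monic) (hi : Irreducible P) {j : ℕ} (hj : 1 ≤ j) :
    polyVonMangoldt F (P ^ j) = P.natDegree := by
  have hex : ∃ Q : F[X], Q.Monic ∧ Irreducible Q ∧
      ∃ k : ℕ, 1 ≤ k ∧ ∃ c : F, c ≠ 0 ∧ P ^ j = C c * Q ^ k :=
    ⟨P, hm, hi, j, hj, 1, one_ne_zero, by simp⟩
  rw [polyVonMangoldt, dif_pos hex]
  obtain ⟨hQm, hQi, k, hk, c, hc, hfe⟩ := hex.choose_spec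
  have h1 : P ∣ C c * hex.choose ^ k := hfe ▸ dvd_pow_self P (by omega)
  have h2 : P ∣ hex.choose ^ k := by
    rwa [IsUnit.dvd_mul_left (isUnit_C.mpr (isUnit_iff_ne_zero.mpr hc))] at h1
  have h3 : P ∣ hex.choose := hi.prime.dvd_of_dvd_pow h2
  have h4 : P = hex.choose := eq_of_monic_of_associated hm hQm (hi.associated_of_dvd hQi h3)
  exact h4 ▸ rfl

lemma vM_one : polyVonMangoldt F (1 : F[X]) = 0 := by
  apply vM_eq_zero
  rintro ⟨P, hPm, hPi, j, hj, c, hc, h⟩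
  have hd : P ∣ (1 : F[X]) := by
    rw [h]; exact Dvd.dvd.mul_left (dvd_pow_self P (by omega)) (C c)
  exact hPi.not_isUnit (isUnit_of_dvd_one hd)

lemma exists_rep_of_vM_ne_zero {g : F[X]} (hg : g.Monic) (h : polyVonMangoldt F g ≠ 0) :
    ∃ P : F[X], P.Monic ∧ Irreducible P ∧ ∃ j : ℕ, 1 ≤ j ∧ g = P ^ j := by
  by_cases hex : ∃ P : F[X], P.Monic ∧ Irreducible P ∧
      ∃ j : ℕ, 1 ≤ j ∧ ∃ c : F, c ≠ 0 ∧ g = C c * P ^ j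
  · obtain ⟨P, hPm, hPi, j, hj, c, hc, hgeq⟩ := hex
    have hc1 : c = 1 := by
      have := hg.leadingCoeff
      rw [hgeq, leadingCoeff_mul, leadingCoeff_C, (hPm.pow j).leadingCoeff, mul_one] at this
      exact this
    exact ⟨P, hPm, hPi, j, hj, by rw [hgeq, hc1, map_one, one_mul]⟩
  · exact absurd (vM_eq_zero hex) h


lemma card_multiples {g : F[X]} (hg : g.Monic) {n : ℕ} (hmn : g.natDegree ≤ n) :
    ((Mset F n).filter (fun f => g ∣ f)).card = Fintype.card F ^ (n - g.natDegree) := by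
  rw [← card_Mset F (n - g.natDegree)]
  apply (Finset.card_bij (fun h _ => g * h) ?_ ?_ ?_).symm
  · intro h hh
    rw [mem_Mset] at hh
    rw [Finset.mem_filter, mem_Mset]
    refine ⟨⟨hg.mul hh.1, ?_⟩, Dvd.intro _ rfl⟩
    rw [natDegree_mul hg.ne_zero hh.1.ne_zero, hh.2]
    omega
  · intro a ha b hb hab
    exact mul_left_cancel₀ hg.ne_zero hab
  · intro f hf
    rw [Finset.mem_filter, mem_Mset] at hf
    obtain ⟨⟨hfm, hfd⟩, h, rfl⟩ := hf
    have hh : h.Monic := hg.of_mul_monic_left hfm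
    refine ⟨h, ?_, rfl⟩
    rw [mem_Mset]
    refine ⟨hh, ?_⟩
    rw [natDegree_mul hg.ne_zero hh.ne_zero] at hfd
    omega


open UniqueFactorizationMonoid in
lemma divisor_sum {f : F[X]} (hf : f.Monic) :
    ∑ m ∈ Finset.range (f.natDegree + 1), ∑ g ∈ Mset F m,
      (if g ∣ f then polyVonMangoldt F g else 0) = f.natDegree := by
  classical
  have hf0 : f ≠ 0 := hf.ne_zero
  set n := f.natDegree with hn
  set s := normalizedFactors f with hs
  have hsm : ∀ P ∈ s, P.Monic := fun P hP => by
    have h0 : P ≠ 0 := (prime_of_normalized_factor P hP).ne_zero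
    rw [← normalize_normalized_factor P hP]
    exact monic_normalize h0
  have hsi : ∀ P ∈ s, Irreducible P := fun P hP => irreducible_of_normalized_factor P hP
  have hcount : ∀ (P : F[X]), P.Monic → Irreducible P → ∀ j : ℕ,
      (P ^ j ∣ f ↔ j ≤ s.count P) := by
    intro P hPm hPi j
    rw [pow_dvd_iff_le_emultiplicity, hs,
      emultiplicity_eq_count_normalizedFactors hPi hf0, hPm.normalize_eq_self, Nat.cast_le]
  set D : Finset ((_ : ℕ) × F[X]) :=
    (((Finset.range (n+1)).sigma (fun m => Mset F m)).filter
      (fun x => x.2 ∣ f)).filter (fun x => polyVonMangoldt F x.2 ≠ 0) with hD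
  set T : Finset ((P : F[X]) × ℕ) := s.toFinset.sigma (fun P => Finset.Icc 1 (s.count P)) with hT
  have step1 : ∑ m ∈ Finset.range (n + 1), ∑ g ∈ Mset F m,
      (if g ∣ f then polyVonMangoldt F g else 0) = ∑ x ∈ D, polyVonMangoldt F x.2 := by
    rw [Finset.sum_sigma', hD, Finset.sum_filter_ne_zero, ← Finset.sum_filter]
  have step2 : ∑ x ∈ D, polyVonMangoldt F x.2 = ∑ a ∈ T, a.1.natDegree := by
    symm
    apply Finset.sum_bij (fun (a : (P : F[X]) × ℕ) (_ : a ∈ T) =>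
      (⟨(a.1 ^ a.2).natDegree, a.1 ^ a.2⟩ : (_ : ℕ) × F[X]))
    · rintro ⟨P, j⟩ ha
      rw [hT, Finset.mem_sigma, Multiset.mem_toFinset, Finset.mem_Icc] at ha
      obtain ⟨hPs, hj1, hjc⟩ := ha
      have hPm := hsm P hPs
      have hPi := hsi P hPs
      have hdvd : P ^ j ∣ f := (hcount P hPm hPi j).mpr hjc
      have hdeg : (P ^ j).natDegree ≤ n := natDegree_le_of_dvd hdvd hf0
      simp only [hD, Finset.mem_filter, Finset.mem_sigma, Finset.mem_range, mem_Mset]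
      refine ⟨⟨⟨by omega, hPm.pow j, trivial⟩, hdvd⟩, ?_⟩
      rw [vM_prime_pow hPm hPi hj1]
      exact hPi.natDegree_pos.ne'
    · rintro ⟨P, j⟩ ha ⟨Q, k⟩ hb h
      rw [hT, Finset.mem_sigma, Multiset.mem_toFinset, Finset.mem_Icc] at ha hb
      have h2 : P ^ j = Q ^ k := by
        have := congrArg (fun x : (_ : ℕ) × F[X] => x.2) h
        exact this
      have hPQ : P = Q := by
        have hPQd : P ∣ Q ^ k := h2 ▸ dvd_pow_self P (Nat.one_le_iff_ne_zero.mp ha.2.1)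
        exact eq_of_monic_of_associated (hsm P ha.1) (hsm Q hb.1)
          ((hsi P ha.1).associated_of_dvd (hsi Q hb.1)
            ((hsi P ha.1).prime.dvd_of_dvd_pow hPQd))
      subst hPQ
      have hjk : j = k := by
        have := congrArg natDegree h2
        rw [natDegree_pow, natDegree_pow] at this
        have hd := (hsi P ha.1).natDegree_pos
        exact Nat.eq_of_mul_eq_mul_right hd this
      rw [hjk]
    · rintro ⟨m, g⟩ hb
      simp only [hD, Finset.mem_filter, Finset.mem_sigma, Finset.mem_range, mem_Mset] at hb
      obtain ⟨⟨⟨hmn, hgm, hgd⟩, hgf⟩, hgv⟩ := hb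
      obtain ⟨P, hPm, hPi, j, hj1, rfl⟩ := exists_rep_of_vM_ne_zero hgm hgv
      have hjc : j ≤ s.count P := (hcount P hPm hPi j).mp hgf
      have hPs : P ∈ s := by
        rw [← Multiset.count_pos]
        omega
      refine ⟨⟨P, j⟩, ?_, ?_⟩
      · rw [hT, Finset.mem_sigma, Multiset.mem_toFinset, Finset.mem_Icc]
        exact ⟨hPs, hj1, hjc⟩
      · simp only [hgd]
    · rintro ⟨P, j⟩ ha
      rw [hT, Finset.mem_sigma, Multiset.mem_toFinset, Finset.mem_Icc] at ha
      exact (vM_prime_pow (hsm P ha.1) (hsi P ha.1) ha.2.1).symm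
  have step3 : ∑ a ∈ T, a.1.natDegree = n := by
    rw [hT, Finset.sum_sigma]
    have h1 : ∀ P ∈ s.toFinset, ∑ _j ∈ Finset.Icc 1 (s.count P), P.natDegree
        = s.count P • P.natDegree := by
      intro P hP
      rw [Finset.sum_const, Nat.card_Icc]
      simp
    rw [Finset.sum_congr rfl h1, ← Finset.sum_multiset_map_count]
    have h2 : (s.map natDegree).sum = s.prod.natDegree := by
      rw [natDegree_multiset_prod]
      intro h0
      exact (prime_of_normalized_factor 0 h0).ne_zero rfl
    rw [h2]
    have h3 : s.prod = f := by
      have hassoc : Associated s.prod f := prod_normalizedFactors hf0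
      have hpm : s.prod.Monic := by
        have := monic_multiset_prod_of_monic s id (fun P hP => hsm P hP)
        rwa [Multiset.map_id] at this
      exact eq_of_monic_of_associated hpm hf hassoc
    rw [h3]
  rw [step1, step2, step3]


lemma key_identity (n : ℕ) :
    ∑ m ∈ Finset.range (n + 1),
      (∑ g ∈ Mset F m, polyVonMangoldt F g) * Fintype.card F ^ (n - m)
      = n * Fintype.card F ^ n := by
  classical
  have lhs_eq : ∀ m ∈ Finset.range (n + 1),
      (∑ g ∈ Mset F m, polyVonMangoldt F g) * Fintype.card F ^ (n - m)
      = ∑ g ∈ Mset F m, ∑ f ∈ Mset F n, (if g ∣ f then polyVonMangoldt F g else 0) := by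
    intro m hm
    rw [Finset.sum_mul]
    apply Finset.sum_congr rfl
    intro g hg
    rw [mem_Mset] at hg
    have hle : g.natDegree ≤ n := by
      rw [hg.2]; exact Nat.lt_succ_iff.mp (Finset.mem_range.mp hm)
    calc polyVonMangoldt F g * Fintype.card F ^ (n - m)
        = polyVonMangoldt F g * ((Mset F n).filter (fun f => g ∣ f)).card := by
          rw [card_multiples hg.1 hle, hg.2]
      _ = ∑ f ∈ Mset F n, (if g ∣ f then polyVonMangoldt F g else 0) := by
          rw [← Finset.sum_filter, Finset.sum_const, smul_eq_mul, mul_comm]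
  rw [Finset.sum_congr rfl lhs_eq, Finset.sum_sigma']
  rw [Finset.sum_comm]
  have inner : ∀ f ∈ Mset F n, ∑ x ∈ (Finset.range (n + 1)).sigma (fun m => Mset F m),
      (if x.2 ∣ f then polyVonMangoldt F x.2 else 0) = n := by
    intro f hf
    rw [mem_Mset] at hf
    rw [Finset.sum_sigma]
    have := divisor_sum hf.1
    rwa [hf.2] at this
  rw [Finset.sum_congr rfl inner, Finset.sum_const, card_Mset, smul_eq_mul, mul_comm]

lemma S_eq : ∀ n : ℕ, 1 ≤ n →
    ∑ g ∈ Mset F n, polyVonMangoldt F g = Fintype.card F ^ n := by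
  intro n
  induction n using Nat.strong_induction_on with
  | _ n IH =>
    intro hn
    obtain ⟨k, rfl⟩ : ∃ k, n = k + 1 := ⟨n - 1, by omega⟩
    have hid := key_identity (F := F) (k + 1)
    rw [Finset.sum_range_succ'] at hid
    have hS0 : ∑ g ∈ Mset F 0, polyVonMangoldt F g = 0 := by
      have hM0 : Mset F 0 = {1} := by
        ext g
        rw [mem_Mset, Finset.mem_singleton]
        constructor
        · rintro ⟨hm, hd⟩; exact (Monic.natDegree_eq_zero hm).mp hd
        · rintro rfl; exact ⟨monic_one, natDegree_one⟩
      rw [hM0, Finset.sum_singleton, vM_one]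
    rw [hS0, zero_mul, add_zero, Finset.sum_range_succ] at hid
    have hsum : ∀ i ∈ Finset.range k, (∑ g ∈ Mset F (i + 1), polyVonMangoldt F g)
        * Fintype.card F ^ (k + 1 - (i + 1)) = Fintype.card F ^ (k + 1) := by
      intro i hi
      rw [Finset.mem_range] at hi
      rw [IH (i + 1) (by omega) (by omega), ← pow_add]
      congr 1
      omega
    rw [Finset.sum_congr rfl hsum, Finset.sum_const, Finset.card_range, Nat.sub_self,
      pow_zero, mul_one, smul_eq_mul, Nat.succ_mul] at hid
    exact Nat.add_left_cancel hid

end Aux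


/-- For every `n ≥ 1`, the sum of `Λ(f)` over all monic
polynomials `f` of degree `n` in `𝔽_q[x]` equals `q^n`. -/
theorem sum_vonMangoldt_monic_degree (F : Type) [Field F] [Fintype F]
    (n : ℕ) (hn : 1 ≤ n) :
    ∑ᶠ f ∈ {f : F[X] | f.Monic ∧ f.natDegree = n}, polyVonMangoldt F f =
      Fintype.card F ^ n := by
  have h1 : {f : F[X] | f.Monic ∧ f.natDegree = n} = ↑(Mset F n) := by
    simp [Mset, Set.Finite.coe_toFinset]
  rw [h1, finsum_mem_coe_finset]
  exact S_eq n hn
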